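/- Let G be a group generated by a subset S, let D = D(S^G) be the Dehn quandle of G with respect to S, let n ≥ 2, and let π : D → D_n be a universal n-quandle quotient. Then there is a surjective group homomorphism Φ̃ : Env(D_n) → H_n := G/⟪x^n y x^{-n} y^{-1} : x, y ∈ S⟫ such that Φ̃(e_{π(c)}) equals the image of c in H_n for every c ∈ D, where ⟪·⟫ denotes normal closure. -/

import Mathlib

open Quandles

universe u v

/-- The Dehn quandle of a group `G` with respect to a subset `S`: the set of all
conjugates of elements of `S`, with conjugation as the quandle operation.
(The paper's `x * y = y x y⁻¹` is Mathlib's `y ◃ x`.) -/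
def DehnQuandle (G : Type*) [Group G] (S : Set G) : Type _ :=
  {x : G // ∃ s ∈ S, IsConj s x}

instance (G : Type*) [Group G] (S : Set G) : Quandle (DehnQuandle G S) where
  act x y := ⟨x.1 * y.1 * x.1⁻¹, by
    obtain ⟨s, hs, hc⟩ := y.2
    exact ⟨s, hs, hc.trans (isConj_iff.mpr ⟨x.1, rfl⟩)⟩⟩
  self_distrib := by
    rintro ⟨x, hx⟩ ⟨y, hy⟩ ⟨z, hz⟩
    apply Subtype.ext
    show x * (y * z * y⁻¹) * x⁻¹ = (x * y * x⁻¹) * (x * z * x⁻¹) * (x * y * x⁻¹)⁻¹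
    group
  invAct x y := ⟨x.1⁻¹ * y.1 * x.1, by
    obtain ⟨s, hs, hc⟩ := y.2
    exact ⟨s, hs, hc.trans (isConj_iff.mpr ⟨x.1⁻¹, by group⟩)⟩⟩
  left_inv := by
    rintro ⟨x, hx⟩ ⟨y, hy⟩
    apply Subtype.ext
    show x⁻¹ * (x * y * x⁻¹) * x = y
    group
  right_inv := by
    rintro ⟨x, hx⟩ ⟨y, hy⟩
    apply Subtype.ext
    show x * (x⁻¹ * y * x) * x⁻¹ = y
    group
  fix := by
    rintro ⟨x, hx⟩
    apply Subtype.ext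
    show x * x * x⁻¹ = x
    group

/-- `Q` is an `n`-quandle: `x *ⁿ y = x` for all `x y` (the paper's `x * y` is `y ◃ x`). -/
def IsNQuandle (Q : Type*) [Quandle Q] (n : ℕ) : Prop :=
  ∀ x y : Q, (fun a => y ◃ a)^[n] x = x

/-- `π : Q → Qn` is a universal `n`-quandle quotient. -/
def IsUniversalNQuandleQuotient {Q : Type u} {Qn : Type v} [Quandle Q] [Quandle Qn]
    (n : ℕ) (π : Q →◃ Qn) : Prop :=
  Function.Surjective π ∧ IsNQuandle Qn n ∧
    ∀ (Y : Type max u v) [Quandle Y], IsNQuandle Y n →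
      ∀ f : Q →◃ Y, ∃! g : Qn →◃ Y, ∀ x, g (π x) = f x

section Aux

/-- Quandle structure on `ULift`. -/
instance ULift.quandle {Q : Type u} [Quandle Q] : Quandle (ULift.{v} Q) where
  act x y := ⟨x.down ◃ y.down⟩
  self_distrib := by rintro ⟨x⟩ ⟨y⟩ ⟨z⟩; exact congrArg ULift.up Shelf.self_distrib
  invAct x y := ⟨x.down ◃⁻¹ y.down⟩
  left_inv x := by rintro ⟨y⟩; exact congrArg ULift.up (Rack.left_inv x.down y)
  right_inv x := by rintro ⟨y⟩; exact congrArg ULift.up (Rack.right_inv x.down y)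
  fix := by rintro ⟨x⟩; exact congrArg ULift.up Quandle.fix

lemma ulift_act_iterate {Q : Type u} [Quandle Q] (y x : ULift.{v} Q) (k : ℕ) :
    (fun a => y ◃ a)^[k] x = ⟨(fun a => y.down ◃ a)^[k] x.down⟩ := by
  induction k generalizing x with
  | zero => rfl
  | succ k ih => rw [Function.iterate_succ_apply, Function.iterate_succ_apply, ih]; rfl

lemma isNQuandle_ulift {Q : Type u} [Quandle Q] {n : ℕ} (h : IsNQuandle Q n) :
    IsNQuandle (ULift.{v} Q) n := by
  intro x y
  rw [ulift_act_iterate, h x.down y.down]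

lemma dehn_act_iterate {H : Type*} [Group H] {T : Set H} (y x : DehnQuandle H T) (k : ℕ) :
    ((fun a => y ◃ a)^[k] x).1 = y.1 ^ k * x.1 * (y.1 ^ k)⁻¹ := by
  induction k generalizing x with
  | zero => simp
  | succ k ih =>
    rw [Function.iterate_succ_apply]
    rw [ih]
    show y.1 ^ k * (y.1 * x.1 * y.1⁻¹) * (y.1 ^ k)⁻¹ = _
    rw [pow_succ]
    group

end Aux

/-- there is a surjective group homomorphism
`Φ̃ : Env(Dₙ) → Hₙ = G/⟪xⁿ y x⁻ⁿ y⁻¹ : x, y ∈ S⟫` with `Φ̃(e_{π c})` the image of `c`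
for every `c` in the Dehn quandle. -/
theorem stmt_6 {G : Type u} [Group G] (S : Set G) (hS : Subgroup.closure S = ⊤)
    {n : ℕ} (hn : 2 ≤ n) {Dn : Type v} [Quandle Dn]
    (π : DehnQuandle G S →◃ Dn) (hπ : IsUniversalNQuandleQuotient n π) :
    ∃ φ : Rack.EnvelGroup Dn →*
        (G ⧸ Subgroup.normalClosure
          {g : G | ∃ x ∈ S, ∃ y ∈ S, g = x ^ n * y * (x ^ n)⁻¹ * y⁻¹}),
      Function.Surjective φ ∧
        ∀ c : DehnQuandle G S,
          φ (Rack.toEnvelGroup Dn (π c)) = QuotientGroup.mk c.1 := by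
  set N : Subgroup G := Subgroup.normalClosure
      {g : G | ∃ x ∈ S, ∃ y ∈ S, g = x ^ n * y * (x ^ n)⁻¹ * y⁻¹} with hN
  let H := G ⧸ N
  let mk : G →* H := QuotientGroup.mk' N
  have hmksurj : Function.Surjective mk := QuotientGroup.mk'_surjective N
  -- the images of S generate H
  have hclos : Subgroup.closure (mk '' S) = ⊤ := by
    rw [← MonoidHom.map_closure, hS, ← MonoidHom.range_eq_map,
      MonoidHom.range_eq_top_of_surjective _ hmksurj]
  -- n-th powers of elements of mk '' S are central
  have hcen : ∀ s ∈ S, ∀ h : H, Commute ((mk s) ^ n) h := by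
    intro s hs h
    have : h ∈ Subgroup.closure (mk '' S) := hclos ▸ Subgroup.mem_top h
    induction this using Subgroup.closure_induction with
    | mem t ht =>
      obtain ⟨y, hy, rfl⟩ := ht
      have hrel : mk (s ^ n * y * (s ^ n)⁻¹ * y⁻¹) = 1 := by
        rw [QuotientGroup.mk'_apply, QuotientGroup.eq_one_iff]
        exact Subgroup.subset_normalClosure ⟨s, hs, y, hy, rfl⟩
      have h2 : (mk s) ^ n * mk y * ((mk s) ^ n)⁻¹ * (mk y)⁻¹ = 1 := by
        simpa [map_mul, map_inv, map_pow] using hrel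
      have h3 : (mk s) ^ n * mk y * ((mk s) ^ n)⁻¹ = mk y := mul_inv_eq_one.mp h2
      exact mul_inv_eq_iff_eq_mul.mp h3
    | one => exact Commute.one_right _
    | mul a b _ _ ha hb => exact ha.mul_right hb
    | inv a _ ha => exact ha.inv_right
  -- n-th powers of elements of the Dehn quandle of H are central
  have hcen' : ∀ z : DehnQuandle H (mk '' S), ∀ h : H, Commute (z.1 ^ n) h := by
    rintro ⟨z, hz⟩ h
    obtain ⟨t, ⟨s, hs, rfl⟩, hc⟩ := hz
    obtain ⟨c, hc'⟩ := isConj_iff.mp hc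
    have hce := (hcen s hs c).eq
    have hzn : z ^ n = (mk s) ^ n := by
      calc z ^ n = c * (mk s) ^ n * c⁻¹ := by rw [← hc', conj_pow]
        _ = (mk s) ^ n := by rw [← hce]; group
    rw [hzn]
    exact hcen s hs h
  have hcenconj : ∀ z : DehnQuandle H (mk '' S), ∀ h : H, Commute (z.1 ^ n) h := hcen'
  -- the Dehn quandle of H is an n-quandle
  have hYn : IsNQuandle (DehnQuandle H (mk '' S)) n := by
    intro x y
    apply Subtype.ext
    rw [dehn_act_iterate]
    rw [(hcen' y x.1).eq]
    group
  -- the lifted quandle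
  let Y : Type max u v := ULift.{v} (DehnQuandle H (mk '' S))
  have hYn' : IsNQuandle Y n := isNQuandle_ulift hYn
  -- the natural quandle hom from the Dehn quandle of G to Y
  let f : DehnQuandle G S →◃ Y :=
    { toFun := fun c => ⟨⟨mk c.1, by
        obtain ⟨s, hs, hc⟩ := c.2
        exact ⟨mk s, ⟨s, hs, rfl⟩, mk.map_isConj hc⟩⟩⟩
      map_act' := by
        rintro ⟨x, hx⟩ ⟨y, hy⟩
        apply congrArg ULift.up
        apply Subtype.ext
        show mk (x * y * x⁻¹) = mk x * mk y * (mk x)⁻¹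
        simp [map_mul, map_inv] }
  obtain ⟨g, hg, -⟩ := hπ.2.2 Y hYn' f
  -- inclusion of Y into the conjugation quandle of H
  let incl : Y →◃ Quandle.Conj H :=
    { toFun := fun y => y.down.1
      map_act' := by rintro ⟨⟨x, hx⟩⟩ ⟨⟨y, hy⟩⟩; rfl }
  let φ : Rack.EnvelGroup Dn →* H := Rack.toEnvelGroup.map (incl.comp g)
  have key : ∀ c : DehnQuandle G S,
      φ (Rack.toEnvelGroup Dn (π c)) = QuotientGroup.mk c.1 := by
    intro c
    have h1 := congrArg (fun (h : Dn →◃ Quandle.Conj H) => h.toFun (π c))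
      (Rack.toEnvelGroup.univ Dn H (incl.comp g))
    simp only [ShelfHom.comp] at h1
    show φ (Rack.toEnvelGroup Dn (π c)) = _
    calc φ (Rack.toEnvelGroup Dn (π c)) = incl (g (π c)) := h1
      _ = incl (f c) := by rw [hg c]
      _ = QuotientGroup.mk c.1 := rfl
  refine ⟨φ, ?_, key⟩
  -- surjectivity
  have : (⊤ : Subgroup H) ≤ φ.range := by
    rw [← hclos, Subgroup.closure_le]
    rintro _ ⟨s, hs, rfl⟩
    exact ⟨Rack.toEnvelGroup Dn (π ⟨s, s, hs, IsConj.refl s⟩), key _⟩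
  intro h
  exact this (Subgroup.mem_top h)
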